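/- In so(2,n) with restricted root system {±α, ±β, ±α±β} as in B₂: let H be an element of the ℝ-split Cartan subalgebra 𝔞, and let Y, Z ∈ 𝔭 (the parabolic subalgebra stabilizing an isotropic line) satisfy [H,Y] = λ₁ Y, [H,Z] = λ₂ Z with λ₁, λ₂ nonzero real numbers, λ₁ ≠ λ₂, and [Y,Z] = 0. Then Y ∈ 𝔭⁺ or Z ∈ 𝔭⁺, where 𝔭⁺ = 𝔤_{α-β} ⊕ 𝔤_α ⊕ 𝔤_{α+β} is the nilradical of 𝔭. -/

import Mathlib

open Matrix

/-- The matrix of the quadratic form `2u₀u_{n+1} + 2u₁u_n + u₂² + ⋯ + u_{n-1}²` of signature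
`(2, n)` on `ℝ^{n+2}` (the paper's fixed coordinates for `so(2,n)`). -/
noncomputable def formMatrix2n (n : ℕ) : Matrix (Fin (n + 2)) (Fin (n + 2)) ℝ :=
  Matrix.of fun i j =>
    if i.val + j.val = n + 1 ∧ (i.val ≤ 1 ∨ j.val ≤ 1) then 1
    else if i = j ∧ 2 ≤ i.val ∧ i.val ≤ n - 1 then 1 else 0

/-- The grading element `A_α = diag(1, 0, …, 0, -1)` of `so(2,n)`. -/
noncomputable def gradingElement (n : ℕ) : Matrix (Fin (n + 2)) (Fin (n + 2)) ℝ :=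
  Matrix.diagonal fun i => if i.val = 0 then (1 : ℝ) else if i.val = n + 1 then -1 else 0

/-- Membership in the ℝ-split Cartan subalgebra `𝔞 = {diag(λ, μ, 0, …, 0, -μ, -λ)}`. -/
def InSplitCartan (n : ℕ) (H : Matrix (Fin (n + 2)) (Fin (n + 2)) ℝ) : Prop :=
  ∃ l m : ℝ, H = Matrix.diagonal fun i =>
    if i.val = 0 then l else if i.val = 1 then m
    else if i.val = n then -m else if i.val = n + 1 then -l else 0

/-! ### Auxiliary machinery -/

/-- The involution of indices induced by the quadratic form. -/
private def sig (n : ℕ) (i : Fin (n + 2)) : Fin (n + 2) :=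
  ⟨if i.val = 0 then n + 1 else if i.val = 1 then n
    else if i.val = n then 1 else if i.val = n + 1 then 0 else i.val, by
      have := i.isLt; split_ifs <;> omega⟩

private lemma sig_val (n : ℕ) (i : Fin (n + 2)) :
    (sig n i).val = if i.val = 0 then n + 1 else if i.val = 1 then n
      else if i.val = n then 1 else if i.val = n + 1 then 0 else i.val := rfl

/-- The diagonal entries of a Cartan element. -/
private def dW (n : ℕ) (l m : ℝ) (i : Fin (n + 2)) : ℝ :=
  if i.val = 0 then l else if i.val = 1 then m
    else if i.val = n then -m else if i.val = n + 1 then -l else 0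

/-- The diagonal entries of the grading element. -/
private def gW (n : ℕ) (i : Fin (n + 2)) : ℝ :=
  if i.val = 0 then (1 : ℝ) else if i.val = n + 1 then -1 else 0

private lemma sig_zero (n : ℕ) : sig n (0 : Fin (n + 2)) = ⟨n + 1, by omega⟩ := by
  apply Fin.ext
  show (sig n 0).val = n + 1
  simp [sig_val]

private lemma sig_one (n : ℕ) (hn : 3 ≤ n) : sig n (1 : Fin (n + 2)) = ⟨n, by omega⟩ := by
  apply Fin.ext
  show (sig n 1).val = n
  rw [sig_val]
  have h1 : (1 : Fin (n + 2)).val = 1 := Fin.val_one n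
  split_ifs <;> omega

private lemma sig_n (n : ℕ) (hn : 3 ≤ n) (i : Fin (n + 2)) (hi : i.val = n) :
    sig n i = (1 : Fin (n + 2)) := by
  apply Fin.ext
  simp only [sig_val, Fin.val_one]
  split_ifs <;> omega

private lemma sig_last (n : ℕ) (hn : 3 ≤ n) (i : Fin (n + 2)) (hi : i.val = n + 1) :
    sig n i = (0 : Fin (n + 2)) := by
  apply Fin.ext
  simp only [sig_val, Fin.val_zero]
  split_ifs <;> omega

private lemma sig_interior (n : ℕ) (hn : 3 ≤ n) (j : Fin (n + 2))
    (h2 : 2 ≤ j.val) (h3 : j.val ≤ n - 1) : sig n j = j := by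
  apply Fin.ext
  rw [sig_val]
  split_ifs <;> omega

private lemma S_apply (n : ℕ) (hn : 3 ≤ n) (i k : Fin (n + 2)) :
    formMatrix2n n i k = if k = sig n i then 1 else 0 := by
  have hi := i.isLt; have hk := k.isLt
  simp only [formMatrix2n, Matrix.of_apply, Fin.ext_iff, sig_val]
  split_ifs <;> first | rfl | omega

private lemma S_apply' (n : ℕ) (hn : 3 ≤ n) (i k : Fin (n + 2)) :
    formMatrix2n n k i = if k = sig n i then 1 else 0 := by
  have hi := i.isLt; have hk := k.isLt
  simp only [formMatrix2n, Matrix.of_apply, Fin.ext_iff, sig_val]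
  split_ifs <;> first | rfl | omega

private lemma soRel (n : ℕ) (hn : 3 ≤ n) (Y : Matrix (Fin (n + 2)) (Fin (n + 2)) ℝ)
    (hso : Yᵀ * formMatrix2n n + formMatrix2n n * Y = 0) (i j : Fin (n + 2)) :
    Y (sig n j) i + Y (sig n i) j = 0 := by
  have h := congrFun (congrFun hso i) j
  simp only [Matrix.add_apply, Matrix.mul_apply, Matrix.transpose_apply, Matrix.zero_apply] at h
  simp only [S_apply' n hn j, S_apply n hn i, mul_ite, ite_mul, mul_one, mul_zero,
    one_mul, zero_mul, Finset.sum_ite_eq', Finset.mem_univ, if_true] at h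
  exact h

private lemma diag_lie_entry (n : ℕ) (d : Fin (n + 2) → ℝ)
    (Y : Matrix (Fin (n + 2)) (Fin (n + 2)) ℝ) (i j : Fin (n + 2)) :
    ⁅Matrix.diagonal d, Y⁆ i j = (d i - d j) * Y i j := by
  rw [Ring.lie_def, Matrix.sub_apply, Matrix.diagonal_mul, Matrix.mul_diagonal]
  ring

private lemma row_last (n : ℕ) (hn : 3 ≤ n) (Y : Matrix (Fin (n + 2)) (Fin (n + 2)) ℝ)
    (hso : ∀ i j, Y (sig n j) i + Y (sig n i) j = 0)
    (hcol : ∀ i : Fin (n + 2), i ≠ 0 → Y i 0 = 0) :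
    ∀ j : Fin (n + 2), j.val ≠ n + 1 → Y ⟨n + 1, by omega⟩ j = 0 := by
  intro j hj
  have h := hso 0 j
  rw [sig_zero n] at h
  have hz : Y (sig n j) 0 = 0 := by
    apply hcol
    intro hc
    have hv := congrArg Fin.val hc
    simp only [sig_val, Fin.val_zero] at hv
    split_ifs at hv <;> omega
  linarith

set_option maxHeartbeats 1000000 in
/-- Extraction: a non-nilradical eigenvector of nonzero weight gives a `±β`-component. -/
private lemma extract (n : ℕ) (hn : 3 ≤ n) (l m lam : ℝ) (hlam : lam ≠ 0)
    (Y : Matrix (Fin (n + 2)) (Fin (n + 2)) ℝ)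
    (hso : ∀ i j, Y (sig n j) i + Y (sig n i) j = 0)
    (hcol : ∀ i : Fin (n + 2), i ≠ 0 → Y i 0 = 0)
    (hw : ∀ i j, Y i j ≠ 0 → dW n l m i - dW n l m j = lam)
    (hnot : ⁅gradingElement n, Y⁆ ≠ Y) :
    (lam = m ∧ ∃ j : Fin (n + 2), 2 ≤ j.val ∧ j.val ≤ n - 1 ∧ Y 1 j ≠ 0) ∨
    (lam = -m ∧ ∃ j : Fin (n + 2), 2 ≤ j.val ∧ j.val ≤ n - 1 ∧ Y j 1 ≠ 0) := by
  obtain ⟨i, j, hij⟩ : ∃ i j, ⁅gradingElement n, Y⁆ i j ≠ Y i j := by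
    by_contra hc
    push_neg at hc
    exact hnot (Matrix.ext hc)
  have hg : gradingElement n = Matrix.diagonal (gW n) := rfl
  rw [hg, diag_lie_entry] at hij
  have hY0 : Y i j ≠ 0 := by
    intro h; rw [h, mul_zero] at hij; exact hij rfl
  have hg1 : gW n i - gW n j ≠ 1 := by
    intro h; rw [h, one_mul] at hij; exact hij rfl
  have hwij := hw i j hY0
  have WT : dW n l m i - dW n l m j = 0 → False := by
    intro h; rw [h] at hwij; exact hlam hwij.symm
  have hrow := row_last n hn Y hso hcol
  have hi := i.isLt; have hj := j.isLt
  have hci : i.val = 0 ∨ i.val = 1 ∨ (2 ≤ i.val ∧ i.val ≤ n - 1) ∨ i.val = n ∨ i.val = n + 1 := by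
    omega
  have hcj : j.val = 0 ∨ j.val = 1 ∨ (2 ≤ j.val ∧ j.val ≤ n - 1) ∨ j.val = n ∨ j.val = n + 1 := by
    omega
  rcases hci with hi1 | hi1 | hi1 | hi1 | hi1
  · -- i = 0
    rcases hcj with hj1 | hj1 | hj1 | hj1 | hj1
    · exact absurd (by simp only [dW]; split_ifs <;> first | ring1 | omega | (exfalso; omega)) (fun h => WT h)
    · exact absurd (by simp only [gW]; split_ifs <;> first | ring1 | omega | (exfalso; omega)) hg1
    · exact absurd (by simp only [gW]; split_ifs <;> first | ring1 | omega | (exfalso; omega)) hg1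
    · exact absurd (by simp only [gW]; split_ifs <;> first | ring1 | omega | (exfalso; omega)) hg1
    · -- corner (0, n+1)
      exfalso; apply hY0
      have hi' : i = (0 : Fin (n + 2)) := Fin.ext (by rw [Fin.val_zero]; exact hi1)
      have hj' : j = ⟨n + 1, by omega⟩ := Fin.ext hj1
      have h := hso ⟨n + 1, by omega⟩ ⟨n + 1, by omega⟩
      rw [sig_last n hn _ rfl] at h
      rw [hi', hj']
      linarith
  · -- i = 1
    rcases hcj with hj1 | hj1 | hj1 | hj1 | hj1
    · exfalso; apply hY0
      have hj' : j = (0 : Fin (n + 2)) := Fin.ext (by rw [Fin.val_zero]; exact hj1)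
      rw [hj']
      exact hcol i (fun hc => by rw [hc, Fin.val_zero] at hi1; omega)
    · exact absurd (by simp only [dW]; split_ifs <;> first | ring1 | omega | (exfalso; omega)) (fun h => WT h)
    · -- (1, interior) : the left case
      left
      have hi' : i = (1 : Fin (n + 2)) := Fin.ext (by rw [Fin.val_one]; exact hi1)
      refine ⟨?_, j, hj1.1, hj1.2, by rw [← hi']; exact hY0⟩
      rw [← hwij]
      simp only [dW]; split_ifs <;> first | ring1 | omega | (exfalso; omega)
    · -- (1, n) : Y 1 n = 0
      exfalso; apply hY0
      have hi' : i = (1 : Fin (n + 2)) := Fin.ext (by rw [Fin.val_one]; exact hi1)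
      have hj' : j = ⟨n, by omega⟩ := Fin.ext hj1
      have h := hso ⟨n, by omega⟩ ⟨n, by omega⟩
      rw [sig_n n hn _ rfl] at h
      rw [hi', hj']
      linarith
    · exact absurd (by simp only [gW]; split_ifs <;> first | ring1 | omega | (exfalso; omega)) hg1
  · -- i interior
    rcases hcj with hj1 | hj1 | hj1 | hj1 | hj1
    · exfalso; apply hY0
      have hj' : j = (0 : Fin (n + 2)) := Fin.ext (by rw [Fin.val_zero]; exact hj1)
      rw [hj']
      exact hcol i (fun hc => by rw [hc, Fin.val_zero] at hi1; omega)
    · -- (interior, 1) : the right case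
      right
      have hj' : j = (1 : Fin (n + 2)) := Fin.ext (by rw [Fin.val_one]; exact hj1)
      refine ⟨?_, i, hi1.1, hi1.2, by rw [← hj']; exact hY0⟩
      rw [← hwij]
      simp only [dW]; split_ifs <;> first | ring1 | omega | (exfalso; omega)
    · exact absurd (by simp only [dW]; split_ifs <;> first | ring1 | omega | (exfalso; omega)) (fun h => WT h)
    · -- (interior, n) : left case via the form relation
      left
      have hj' : j = ⟨n, by omega⟩ := Fin.ext hj1
      have h := hso ⟨n, by omega⟩ i
      rw [sig_interior n hn i hi1.1 hi1.2, sig_n n hn _ rfl] at h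
      refine ⟨?_, i, hi1.1, hi1.2, ?_⟩
      · rw [← hwij]
        simp only [dW]; split_ifs <;> first | ring1 | omega | (exfalso; omega)
      · intro hc
        apply hY0
        rw [hj']
        linarith
    · exact absurd (by simp only [gW]; split_ifs <;> first | ring1 | omega | (exfalso; omega)) hg1
  · -- i = n
    rcases hcj with hj1 | hj1 | hj1 | hj1 | hj1
    · exfalso; apply hY0
      have hj' : j = (0 : Fin (n + 2)) := Fin.ext (by rw [Fin.val_zero]; exact hj1)
      rw [hj']
      exact hcol i (fun hc => by rw [hc, Fin.val_zero] at hi1; omega)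
    · -- (n, 1) : Y n 1 = 0
      exfalso; apply hY0
      have hi' : i = ⟨n, by omega⟩ := Fin.ext hi1
      have hj' : j = (1 : Fin (n + 2)) := Fin.ext (by rw [Fin.val_one]; exact hj1)
      have h := hso (1 : Fin (n + 2)) (1 : Fin (n + 2))
      rw [sig_one n hn] at h
      rw [hi', hj']
      linarith
    · -- (n, interior) : right case via the form relation
      right
      have hi' : i = ⟨n, by omega⟩ := Fin.ext hi1
      have h := hso j (1 : Fin (n + 2))
      rw [sig_one n hn, sig_interior n hn j hj1.1 hj1.2] at h
      refine ⟨?_, j, hj1.1, hj1.2, ?_⟩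
      · rw [← hwij]
        simp only [dW]; split_ifs <;> first | ring1 | omega | (exfalso; omega)
      · intro hc
        apply hY0
        rw [hi']
        linarith
    · exact absurd (by simp only [dW]; split_ifs <;> first | ring1 | omega | (exfalso; omega)) (fun h => WT h)
    · exact absurd (by simp only [gW]; split_ifs <;> first | ring1 | omega | (exfalso; omega)) hg1
  · -- i = n + 1
    rcases hcj with hj1 | hj1 | hj1 | hj1 | hj1 <;>
      [skip; skip; skip; skip;
        exact absurd (by simp only [dW]; split_ifs <;> first | ring1 | omega | (exfalso; omega)) (fun h => WT h)] <;>
    · exfalso; apply hY0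
      have hi' : i = ⟨n + 1, by omega⟩ := Fin.ext hi1
      rw [hi']
      exact hrow j (by omega)

set_option maxHeartbeats 1000000 in
/-- Final contradiction: commuting `β` and `-β` components must pair nontrivially. -/
private lemma final (n : ℕ) (hn : 3 ≤ n) (l m : ℝ) (hm : m ≠ 0)
    (Y Z : Matrix (Fin (n + 2)) (Fin (n + 2)) ℝ)
    (hsoY : ∀ i j, Y (sig n j) i + Y (sig n i) j = 0)
    (hsoZ : ∀ i j, Z (sig n j) i + Z (sig n i) j = 0)
    (hcolY : ∀ i : Fin (n + 2), i ≠ 0 → Y i 0 = 0)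
    (hcolZ : ∀ i : Fin (n + 2), i ≠ 0 → Z i 0 = 0)
    (hwY : ∀ i j, Y i j ≠ 0 → dW n l m i - dW n l m j = m)
    (hwZ : ∀ i j, Z i j ≠ 0 → dW n l m i - dW n l m j = -m)
    (hYZ : ⁅Y, Z⁆ = 0)
    (j₀ k₀ : Fin (n + 2)) (hj₀ : 2 ≤ j₀.val ∧ j₀.val ≤ n - 1) (hk₀ : 2 ≤ k₀.val ∧ k₀.val ≤ n - 1)
    (hu : Y 1 j₀ ≠ 0) (hv : Z k₀ 1 ≠ 0) : False := by
  have zY : ∀ i j : Fin (n + 2), dW n l m i - dW n l m j ≠ m → Y i j = 0 := by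
    intro i j h
    by_contra hc
    exact h (hwY i j hc)
  have zZ : ∀ i j : Fin (n + 2), dW n l m i - dW n l m j ≠ -m → Z i j = 0 := by
    intro i j h
    by_contra hc
    exact h (hwZ i j hc)
  have hv1 : (1 : Fin (n + 2)).val = 1 := Fin.val_one n
  have hrowY := row_last n hn Y hsoY hcolY
  have hrowZ := row_last n hn Z hsoZ hcolZ
  have hbr : Y * Z - Z * Y = 0 := by rw [← Ring.lie_def]; exact hYZ
  set T : Finset (Fin (n + 2)) :=
    Finset.univ.filter (fun k : Fin (n + 2) => 2 ≤ k.val ∧ k.val ≤ n - 1) with hT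
  have hmemT : ∀ k : Fin (n + 2), k ∈ T ↔ (2 ≤ k.val ∧ k.val ≤ n - 1) := by
    intro k; simp [hT]
  -- Step A : ∑_{k ∈ T} Y 1 k * Z k 1 = 0
  have h11 := congrFun (congrFun hbr 1) 1
  simp only [Matrix.sub_apply, Matrix.mul_apply, Matrix.zero_apply] at h11
  have hBzero : ∀ k : Fin (n + 2), Z 1 k * Y k 1 = 0 := by
    intro k
    have hk := k.isLt
    have hck : k.val = 0 ∨ k.val = 1 ∨ (2 ≤ k.val ∧ k.val ≤ n - 1) ∨ k.val = n ∨ k.val = n + 1 := by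
      omega
    rcases hck with hc | hc | hc | hc | hc
    · have hk' : k = (0 : Fin (n + 2)) := Fin.ext (by rw [Fin.val_zero]; exact hc)
      rw [hk', hcolZ 1 (fun hcc => by
        have := congrArg Fin.val hcc; rw [Fin.val_one, Fin.val_zero] at this; omega), zero_mul]
    · rw [zZ 1 k (by
        simp only [dW]
        split_ifs <;> intro hEq <;> first | omega | (apply hm; linarith)), zero_mul]
    · rw [zZ 1 k (by
        simp only [dW]
        split_ifs <;> intro hEq <;> first | omega | (apply hm; linarith)), zero_mul]
    · rw [zZ 1 k (by
        simp only [dW]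
        split_ifs <;> intro hEq <;> first | omega | (apply hm; linarith)), zero_mul]
    · have hk' : k = ⟨n + 1, by omega⟩ := Fin.ext hc
      rw [hk', hrowY 1 (by rw [Fin.val_one]; omega), mul_zero]
  have huniv : ∑ k : Fin (n + 2), Y 1 k * Z k 1 = 0 := by
    have h2 : ∑ k : Fin (n + 2), Z 1 k * Y k 1 = 0 :=
      Finset.sum_eq_zero (fun k _ => hBzero k)
    rw [h2, sub_zero] at h11
    exact h11
  have hA : ∑ k ∈ T, Y 1 k * Z k 1 = 0 := by
    rw [Finset.sum_subset (Finset.subset_univ T) ?van]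
    · exact huniv
    case van =>
      intro k _ hkT
      rw [hmemT] at hkT
      have hk := k.isLt
      have hck : k.val = 0 ∨ k.val = 1 ∨ k.val = n ∨ k.val = n + 1 := by omega
      rcases hck with hc | hc | hc | hc
      · have hk' : k = (0 : Fin (n + 2)) := Fin.ext (by rw [Fin.val_zero]; exact hc)
        rw [hk', hcolY 1 (fun hcc => by
          have := congrArg Fin.val hcc; rw [Fin.val_one, Fin.val_zero] at this; omega), zero_mul]
      · rw [zY 1 k (by
          simp only [dW]
          split_ifs <;> intro hEq <;> first | omega | (apply hm; linarith)), zero_mul]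
      · rw [zY 1 k (by
          simp only [dW]
          split_ifs <;> intro hEq <;> first | omega | (apply hm; linarith)), zero_mul]
      · have hk' : k = ⟨n + 1, by omega⟩ := Fin.ext hc
        rw [hk', hrowZ 1 (by rw [Fin.val_one]; omega), mul_zero]
  -- Step B : for interior j k, Y 1 j * Z k 1 = Z j 1 * Y 1 k
  have hrel : ∀ j k : Fin (n + 2), j ∈ T → k ∈ T → Y 1 j * Z k 1 = Z j 1 * Y 1 k := by
    intro j k hjT hkT
    rw [hmemT] at hjT hkT
    have hj0 : j ≠ (0 : Fin (n + 2)) := fun hc => by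
      rw [hc, Fin.val_zero] at hjT; omega
    have hjk := congrFun (congrFun hbr j) k
    simp only [Matrix.sub_apply, Matrix.mul_apply, Matrix.zero_apply] at hjk
    have hsum1 : ∑ t : Fin (n + 2), Y j t * Z t k = Y j ⟨n, by omega⟩ * Z ⟨n, by omega⟩ k := by
      apply Finset.sum_eq_single_of_mem _ (Finset.mem_univ _)
      intro t _ htne
      have ht := t.isLt
      have htn : t.val ≠ n := fun hc => htne (Fin.ext hc)
      have hct : t.val = 0 ∨ t.val = 1 ∨ (2 ≤ t.val ∧ t.val ≤ n - 1) ∨ t.val = n + 1 := by omega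
      rcases hct with hc | hc | hc | hc
      · have ht' : t = (0 : Fin (n + 2)) := Fin.ext (by rw [Fin.val_zero]; exact hc)
        rw [ht', hcolY j hj0, zero_mul]
      · rw [zY j t (by
          simp only [dW]
          split_ifs <;> intro hEq <;> first | omega | (apply hm; linarith)), zero_mul]
      · rw [zY j t (by
          simp only [dW]
          split_ifs <;> intro hEq <;> first | omega | (apply hm; linarith)), zero_mul]
      · have ht' : t = ⟨n + 1, by omega⟩ := Fin.ext hc
        rw [ht', hrowZ k (by omega), mul_zero]
    have hsum2 : ∑ t : Fin (n + 2), Z j t * Y t k = Z j 1 * Y 1 k := by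
      apply Finset.sum_eq_single_of_mem _ (Finset.mem_univ _)
      intro t _ htne
      have ht := t.isLt
      have ht1 : t.val ≠ 1 := fun hc => htne (Fin.ext (by rw [Fin.val_one]; exact hc))
      have hct : t.val = 0 ∨ (2 ≤ t.val ∧ t.val ≤ n - 1) ∨ t.val = n ∨ t.val = n + 1 := by omega
      rcases hct with hc | hc | hc | hc
      · have ht' : t = (0 : Fin (n + 2)) := Fin.ext (by rw [Fin.val_zero]; exact hc)
        rw [ht', hcolZ j hj0, zero_mul]
      · rw [zZ j t (by
          simp only [dW]
          split_ifs <;> intro hEq <;> first | omega | (apply hm; linarith)), zero_mul]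
      · rw [zY t k (by
          simp only [dW]
          split_ifs <;> intro hEq <;> first | omega | (apply hm; linarith)), mul_zero]
      · have ht' : t = ⟨n + 1, by omega⟩ := Fin.ext hc
        rw [ht', hrowY k (by omega), mul_zero]
    rw [hsum1, hsum2] at hjk
    have e1 : Y j ⟨n, by omega⟩ = -Y 1 j := by
      have h := hsoY ⟨n, by omega⟩ j
      rw [sig_interior n hn j hjT.1 hjT.2, sig_n n hn _ rfl] at h
      linarith
    have e2 : Z ⟨n, by omega⟩ k = -Z k 1 := by
      have h := hsoZ k (1 : Fin (n + 2))
      rw [sig_one n hn, sig_interior n hn k hkT.1 hkT.2] at h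
      linarith
    rw [e1, e2] at hjk
    linear_combination hjk
  -- Step C : contradiction
  have hj₀T : j₀ ∈ T := (hmemT j₀).mpr hj₀
  have hk₀T : k₀ ∈ T := (hmemT k₀).mpr hk₀
  have key : Y 1 j₀ * ∑ k ∈ T, (Z k 1) ^ 2 = 0 := by
    rw [Finset.mul_sum]
    calc ∑ k ∈ T, Y 1 j₀ * (Z k 1) ^ 2
        = ∑ k ∈ T, Z j₀ 1 * (Y 1 k * Z k 1) :=
          Finset.sum_congr rfl (fun k hk => by
            rw [pow_two, ← mul_assoc, hrel j₀ k hj₀T hk, mul_assoc])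
      _ = Z j₀ 1 * ∑ k ∈ T, Y 1 k * Z k 1 := (Finset.mul_sum _ _ _).symm
      _ = 0 := by rw [hA, mul_zero]
  have hsum0 : ∑ k ∈ T, (Z k 1) ^ 2 = 0 := by
    rcases mul_eq_zero.mp key with h | h
    · exact absurd h hu
    · exact h
  have hz : (Z k₀ 1) ^ 2 = 0 :=
    (Finset.sum_eq_zero_iff_of_nonneg (fun k _ => sq_nonneg (Z k 1))).mp hsum0 k₀ hk₀T
  exact hv (pow_eq_zero_iff (two_ne_zero) |>.mp hz)

set_option maxHeartbeats 1000000 in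
/-- In `so(2,n)` with its `B₂` restricted root system: if `H ∈ 𝔞`,
`Y, Z ∈ 𝔭` (the parabolic stabilizing the isotropic line `ℝe₀`) satisfy `[H,Y] = λ₁Y`,
`[H,Z] = λ₂Z` with `λ₁, λ₂` nonzero and distinct, and `[Y,Z] = 0`, then `Y ∈ 𝔭⁺` or
`Z ∈ 𝔭⁺`, where `𝔭⁺ = 𝔤_{α-β} ⊕ 𝔤_α ⊕ 𝔤_{α+β}` is the nilradical of `𝔭`, i.e. the
degree-one space `{W : [A_α, W] = W}` of the grading. -/
theorem parabolic_eigenvectors_in_nilradical (n : ℕ) (hn : 3 ≤ n)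
    (H Y Z : Matrix (Fin (n + 2)) (Fin (n + 2)) ℝ)
    (hH : InSplitCartan n H)
    (hYso : Yᵀ * formMatrix2n n + formMatrix2n n * Y = 0)
    (hZso : Zᵀ * formMatrix2n n + formMatrix2n n * Z = 0)
    (hYpar : ∃ c : ℝ, Y.mulVec (Pi.single 0 1 : Fin (n + 2) → ℝ) = c • (Pi.single 0 1 : Fin (n + 2) → ℝ))
    (hZpar : ∃ c : ℝ, Z.mulVec (Pi.single 0 1 : Fin (n + 2) → ℝ) = c • (Pi.single 0 1 : Fin (n + 2) → ℝ))
    (l₁ l₂ : ℝ) (hl₁ : l₁ ≠ 0) (hl₂ : l₂ ≠ 0) (hne : l₁ ≠ l₂)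
    (hHY : ⁅H, Y⁆ = l₁ • Y) (hHZ : ⁅H, Z⁆ = l₂ • Z) (hYZ : ⁅Y, Z⁆ = 0) :
    ⁅gradingElement n, Y⁆ = Y ∨ ⁅gradingElement n, Z⁆ = Z := by
  obtain ⟨l, m, hHd⟩ := hH
  have hHd' : H = Matrix.diagonal (dW n l m) := hHd
  rw [hHd'] at hHY hHZ
  have hwY : ∀ i j, Y i j ≠ 0 → dW n l m i - dW n l m j = l₁ := by
    intro i j h0
    have h := congrFun (congrFun hHY i) j
    rw [diag_lie_entry] at h
    simp only [Matrix.smul_apply, smul_eq_mul] at h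
    exact mul_right_cancel₀ h0 h
  have hwZ : ∀ i j, Z i j ≠ 0 → dW n l m i - dW n l m j = l₂ := by
    intro i j h0
    have h := congrFun (congrFun hHZ i) j
    rw [diag_lie_entry] at h
    simp only [Matrix.smul_apply, smul_eq_mul] at h
    exact mul_right_cancel₀ h0 h
  have hcolY : ∀ i : Fin (n + 2), i ≠ 0 → Y i 0 = 0 := by
    obtain ⟨c, hc⟩ := hYpar
    intro i hi
    rw [Matrix.mulVec_single] at hc
    have h := congrFun hc i
    simpa [Pi.single_apply, hi] using h
  have hcolZ : ∀ i : Fin (n + 2), i ≠ 0 → Z i 0 = 0 := by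
    obtain ⟨c, hc⟩ := hZpar
    intro i hi
    rw [Matrix.mulVec_single] at hc
    have h := congrFun hc i
    simpa [Pi.single_apply, hi] using h
  have hsoY := soRel n hn Y hYso
  have hsoZ := soRel n hn Z hZso
  by_contra hcon
  push_neg at hcon
  obtain ⟨hnY, hnZ⟩ := hcon
  have eY := extract n hn l m l₁ hl₁ Y hsoY hcolY hwY hnY
  have eZ := extract n hn l m l₂ hl₂ Z hsoZ hcolZ hwZ hnZ
  rcases eY with ⟨h1, j₀, hj₀a, hj₀b, hu⟩ | ⟨h1, j₀, hj₀a, hj₀b, hu⟩ <;>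
    rcases eZ with ⟨h2, k₀, hk₀a, hk₀b, hv⟩ | ⟨h2, k₀, hk₀a, hk₀b, hv⟩
  · exact hne (h1.trans h2.symm)
  · have hm : m ≠ 0 := fun h => hl₁ (by rw [h1, h])
    exact final n hn l m hm Y Z hsoY hsoZ hcolY hcolZ
      (fun i j h => by rw [hwY i j h, h1]) (fun i j h => by rw [hwZ i j h, h2]) hYZ
      j₀ k₀ ⟨hj₀a, hj₀b⟩ ⟨hk₀a, hk₀b⟩ hu hv
  · have hm : m ≠ 0 := fun h => hl₂ (by rw [h2, h])
    have hZY : ⁅Z, Y⁆ = 0 := by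
      have h := hYZ; rw [Ring.lie_def] at h ⊢; rw [← neg_sub, h, neg_zero]
    exact final n hn l m hm Z Y hsoZ hsoY hcolZ hcolY
      (fun i j h => by rw [hwZ i j h, h2]) (fun i j h => by rw [hwY i j h, h1]) hZY
      k₀ j₀ ⟨hk₀a, hk₀b⟩ ⟨hj₀a, hj₀b⟩ hv hu
  · exact hne (by rw [h1, h2])
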